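/- Let C be a full subcategory of mod Λ closed under isomorphisms, and let H(C) denote the full subcategory of the arrow category of mod Λ consisting of all morphisms between objects of C. If C is contravariantly finite in mod Λ, then H(C) is contravariantly finite in the arrow category of mod Λ, i.e., every morphism f : A → B of finite-dimensional Λ-modules admits a right H(C)-approximation; respectively, if C is covariantly finite in mod Λ, then H(C) is covariantly finite in the arrow category of mod Λ. -/

import Mathlib

open CategoryTheory CategoryTheory.Limits

universe u

section Defs
variable {Λ : Type u} [Ring Λ]

/-- A short exact sequence `0 → X → Y → Z → 0` of Λ-modules. -/
def ShortExactSeq {X Y Z : ModuleCat.{u} Λ} (f : X ⟶ Y) (g : Y ⟶ Z) : Prop :=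
  Function.Injective f ∧ Function.Surjective g ∧ Function.Exact f g

variable (C : Set (ModuleCat.{u} Λ))

/-- An inflation of the exact category `C`: an injective map between objects of `C`
whose cokernel lies in `C`. -/
def IsInflation {X Y : ModuleCat.{u} Λ} (f : X ⟶ Y) : Prop :=
  X ∈ C ∧ Y ∈ C ∧ Function.Injective f ∧ ∃ Z ∈ C, ∃ g : Y ⟶ Z, ShortExactSeq f g

/-- A deflation of the exact category `C`: a surjective map between objects of `C`
whose kernel lies in `C`. -/
def IsDeflation {X Y : ModuleCat.{u} Λ} (f : X ⟶ Y) : Prop :=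
  X ∈ C ∧ Y ∈ C ∧ Function.Surjective f ∧ ∃ Z ∈ C, ∃ g : Z ⟶ X, ShortExactSeq g f

/-- The monomorphism category `S(C)`, as a subcategory of the arrow category. -/
def SMono : Set (Arrow (ModuleCat.{u} Λ)) := {a | IsInflation C a.hom}

/-- The epimorphism category `F(C)`, as a subcategory of the arrow category. -/
def FEpi : Set (Arrow (ModuleCat.{u} Λ)) := {a | IsDeflation C a.hom}

/-- `I` is a `C`-injective object. -/
def CInjective (I : ModuleCat.{u} Λ) : Prop :=
  I ∈ C ∧ ∀ (U V : ModuleCat.{u} Λ), U ∈ C → V ∈ C →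
    ∀ (f : I ⟶ U) (g : U ⟶ V), ShortExactSeq f g → ∃ r : U ⟶ I, f ≫ r = 𝟙 I

/-- `P` is a `C`-projective object. -/
def CProjective (P : ModuleCat.{u} Λ) : Prop :=
  P ∈ C ∧ ∀ (U V : ModuleCat.{u} Λ), U ∈ C → V ∈ C →
    ∀ (f : U ⟶ V) (g : V ⟶ P), ShortExactSeq f g → ∃ s : P ⟶ V, s ≫ g = 𝟙 P

/-- `C` has enough `C`-injectives. -/
def EnoughCInjectives : Prop :=
  ∀ X ∈ C, ∃ (I X' : ModuleCat.{u} Λ), CInjective C I ∧ X' ∈ C ∧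
    ∃ (e : X ⟶ I) (q : I ⟶ X'), ShortExactSeq e q

/-- `C` has enough `C`-projectives. -/
def EnoughCProjectives : Prop :=
  ∀ X ∈ C, ∃ (P X' : ModuleCat.{u} Λ), CProjective C P ∧ X' ∈ C ∧
    ∃ (q : X' ⟶ P) (p : P ⟶ X), ShortExactSeq q p

def ClosedUnderIso : Prop := ∀ (M N : ModuleCat.{u} Λ), (M ≅ N) → M ∈ C → N ∈ C
def ContainsZero : Prop := ∀ M : ModuleCat.{u} Λ, Subsingleton M → M ∈ C
def ClosedUnderSums : Prop := ∀ M N : ModuleCat.{u} Λ, M ∈ C → N ∈ C → (M ⊞ N) ∈ C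
def ClosedUnderExtensions : Prop :=
  ∀ (X Y Z : ModuleCat.{u} Λ) (f : X ⟶ Y) (g : Y ⟶ Z),
    X ∈ C → Z ∈ C → ShortExactSeq f g → Y ∈ C

end Defs

section Approx
variable {A : Type*} [Category A] (D : Set A)

/-- `g : Y ⟶ Z` is a right `D`-approximation of `Z`. -/
def IsRightApprox {Y Z : A} (g : Y ⟶ Z) : Prop :=
  Y ∈ D ∧ ∀ W ∈ D, ∀ u : W ⟶ Z, ∃ v : W ⟶ Y, v ≫ g = u

/-- `g : Z ⟶ Y` is a left `D`-approximation of `Z`. -/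
def IsLeftApprox {Z Y : A} (g : Z ⟶ Y) : Prop :=
  Y ∈ D ∧ ∀ W ∈ D, ∀ u : Z ⟶ W, ∃ v : Y ⟶ W, g ≫ v = u

end Approx

section Finiteness
variable {Λ : Type u} [Ring Λ]

/-- Contravariant finiteness of `C` in `mod Λ` (the finite-dimensional Λ-modules). -/
def ContravariantlyFinite (C : Set (ModuleCat.{u} Λ)) : Prop :=
  ∀ M : ModuleCat.{u} Λ, Module.Finite Λ M →
    ∃ (Y : ModuleCat.{u} Λ) (g : Y ⟶ M), IsRightApprox C g

/-- Covariant finiteness of `C` in `mod Λ`. -/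
def CovariantlyFinite (C : Set (ModuleCat.{u} Λ)) : Prop :=
  ∀ M : ModuleCat.{u} Λ, Module.Finite Λ M →
    ∃ (Y : ModuleCat.{u} Λ) (g : M ⟶ Y), IsLeftApprox C g

end Finiteness

/-- The morphism category `H(C)`: all arrows between objects of `C`. -/
def HMor {Λ : Type u} [Ring Λ] (C : Set (ModuleCat.{u} Λ)) : Set (Arrow (ModuleCat.{u} Λ)) :=
  {a | a.left ∈ C ∧ a.right ∈ C}

/-- If `C` is contravariantly (resp. covariantly) finite in `mod Λ`, then
`H(C)` is contravariantly (resp. covariantly) finite in the arrow category of `mod Λ`. -/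
theorem hmor_functorially_finite
    (k : Type u) [Field k] (Λ : Type u) [Ring Λ] [Algebra k Λ] [FiniteDimensional k Λ]
    (C : Set (ModuleCat.{u} Λ))
    (hCfd : ∀ M ∈ C, Module.Finite Λ M)
    (hCiso : ClosedUnderIso C) :
    (ContravariantlyFinite C →
      ∀ a : Arrow (ModuleCat.{u} Λ), Module.Finite Λ a.left → Module.Finite Λ a.right →
        ∃ (b : Arrow (ModuleCat.{u} Λ)) (g : b ⟶ a), IsRightApprox (HMor C) g) ∧
    (CovariantlyFinite C →
      ∀ a : Arrow (ModuleCat.{u} Λ), Module.Finite Λ a.left → Module.Finite Λ a.right →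
        ∃ (b : Arrow (ModuleCat.{u} Λ)) (g : a ⟶ b), IsLeftApprox (HMor C) g) := by

  constructor
  · -- contravariant case: pullback construction
    intro hcf a hfl hfr
    obtain ⟨YB, gB, hYB, happB⟩ := hcf a.right hfr
    haveI : Module.Finite Λ YB := hCfd YB hYB
    haveI : IsNoetherian k Λ := inferInstance
    haveI : IsNoetherianRing Λ := isNoetherianRing_iff.mpr (isNoetherian_of_tower k inferInstance)
    haveI : Module.Finite Λ a.left := hfl
    -- the pullback of a.hom and gB, as a submodule of the product
    set f : a.left →ₗ[Λ] a.right := a.hom.hom with hf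
    set K : Submodule Λ (a.left × YB) :=
      LinearMap.ker ((f.comp (LinearMap.fst Λ a.left YB)) -
        (gB.hom.comp (LinearMap.snd Λ a.left YB))) with hK
    haveI : Module.Finite Λ ↥K := Module.Finite.iff_fg.mpr (IsNoetherian.noetherian K)
    set P : ModuleCat.{u} Λ := ModuleCat.of Λ ↥K with hP
    set pl : P ⟶ a.left := ModuleCat.ofHom ((LinearMap.fst Λ a.left YB).comp K.subtype) with hpl
    set pr : P ⟶ YB := ModuleCat.ofHom ((LinearMap.snd Λ a.left YB).comp K.subtype) with hpr
    have hKmem : ∀ x : ↥K, a.hom (pl x) = gB (pr x) := by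
      rintro ⟨⟨x1, x2⟩, hx⟩
      have h0 : f x1 - gB x2 = 0 := LinearMap.mem_ker.mp hx
      show f x1 = gB x2
      rwa [sub_eq_zero] at h0
    obtain ⟨YP, gP, hYP, happP⟩ := hcf P (by show Module.Finite Λ ↥K; infer_instance)
    refine ⟨Arrow.mk (gP ≫ pr), Arrow.homMk (u := gP ≫ pl) (v := gB) ?_, ⟨hYP, hYB⟩, ?_⟩
    · ext x
      exact hKmem (gP x)
    · rintro W ⟨hW1, hW2⟩ u
      obtain ⟨v', hv'⟩ := happB W.right hW2 u.right
      have huw : ∀ x : W.left, a.hom (u.left x) = u.right (W.hom x) := by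
        intro x
        exact congrFun (congrArg (fun (h : W.left ⟶ a.right) => (h : W.left → a.right))
          (Arrow.w u)) x
      set t : W.left ⟶ P := ModuleCat.ofHom <| LinearMap.codRestrict K
        (LinearMap.prod u.left.hom (v'.hom.comp W.hom.hom)) (by
          intro x
          have hgv : gB (v' (W.hom x)) = u.right (W.hom x) :=
            congrFun (congrArg (fun (h : W.right ⟶ a.right) => (h : W.right → a.right)) hv')
              (W.hom x)
          refine LinearMap.mem_ker.mpr ?_
          show f (u.left x) - gB (v' (W.hom x)) = 0
          rw [hgv, sub_eq_zero]
          exact huw x) with ht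
      obtain ⟨w, hw⟩ := happP W.left hW1 t
      have hwt : ∀ x : W.left, gP (w x) = t x := by
        intro x
        exact congrFun (congrArg (fun (h : W.left ⟶ P) => (h : W.left → P)) hw) x
      refine ⟨Arrow.homMk (u := w) (v := v') ?_, ?_⟩
      · ext x
        show pr (gP (w x)) = v' (W.hom x)
        rw [hwt x]
        rfl
      · ext x
        · show pl (gP (w x)) = u.left x
          rw [hwt x]
          rfl
        · show gB (v' x) = u.right x
          exact congrFun (congrArg (fun (h : W.right ⟶ a.right) =>
            (h : W.right → a.right)) hv') x
  · -- covariant case: pushout construction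
    intro hcv a hfl hfr
    obtain ⟨YA, gA, hYA, happA⟩ := hcv a.left hfl
    haveI : Module.Finite Λ YA := hCfd YA hYA
    haveI : Module.Finite Λ a.right := hfr
    -- the pushout of gA and a.hom, as a quotient of the product
    set f : a.left →ₗ[Λ] a.right := a.hom.hom with hf
    set S : Submodule Λ (YA × a.right) := LinearMap.range (gA.hom.prod (-f)) with hS
    set Q : ModuleCat.{u} Λ := ModuleCat.of Λ ((YA × a.right) ⧸ S) with hQ
    set il : YA ⟶ Q := ModuleCat.ofHom (S.mkQ.comp (LinearMap.inl Λ YA a.right)) with hil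
    set ir : a.right ⟶ Q := ModuleCat.ofHom (S.mkQ.comp (LinearMap.inr Λ YA a.right)) with hir
    have hcomm : ∀ x : a.left, il (gA x) = ir (a.hom x) := by
      intro x
      show S.mkQ (gA x, 0) = S.mkQ (0, f x)
      rw [Submodule.mkQ_apply, Submodule.mkQ_apply, Submodule.Quotient.eq]
      refine ⟨x, ?_⟩
      show (gA x, -(f x)) = (gA x, 0) - (0, f x)
      simp [Prod.ext_iff]
    haveI : Module.Finite Λ ((YA × a.right) ⧸ S) := Module.Finite.quotient Λ S
    obtain ⟨YQ, j, hYQ, happQ⟩ := hcv Q (by show Module.Finite Λ ((YA × a.right) ⧸ S); infer_instance)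
    refine ⟨Arrow.mk (il ≫ j), Arrow.homMk (u := gA) (v := ir ≫ j) ?_, ⟨hYA, hYQ⟩, ?_⟩
    · ext x
      show j (il (gA x)) = j (ir (a.hom x))
      rw [hcomm x]
    · rintro W ⟨hW1, hW2⟩ u
      obtain ⟨u', hu'⟩ := happA W.left hW1 u.left
      have hu'x : ∀ x : a.left, u' (gA x) = u.left x := by
        intro x
        exact congrFun (congrArg (fun (h : a.left ⟶ W.left) => (h : a.left → W.left)) hu') x
      have huw : ∀ x : a.left, W.hom (u.left x) = u.right (a.hom x) := by
        intro x
        exact congrFun (congrArg (fun (h : a.left ⟶ W.right) =>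
          (h : a.left → W.right)) (Arrow.w u)) x
      set Wh : (↑W.left : Type u) →ₗ[Λ] (↑W.right : Type u) := W.hom.hom with hWh
      set ur : (↑a.right : Type u) →ₗ[Λ] (↑W.right : Type u) := u.right.hom with hur
      set m : (YA × a.right) →ₗ[Λ] W.right := (Wh.comp u'.hom).coprod ur with hm
      have hSm : S ≤ LinearMap.ker m := by
        rintro _ ⟨x, rfl⟩
        refine LinearMap.mem_ker.mpr ?_
        rw [hm]
        erw [LinearMap.coprod_apply]
        simp only [LinearMap.prod_apply, Pi.prod, Function.prod, LinearMap.comp_apply, LinearMap.neg_apply]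
        have e1 : Wh (u'.hom (gA.hom x)) = ur (f x) :=
          (congrArg Wh (hu'x x)).trans (huw x)
        rw [e1, ← map_add, add_neg_cancel, map_zero]
      set h : Q ⟶ W.right := ModuleCat.ofHom (S.liftQ m hSm) with hh
      have hilh : ∀ x : YA, h (il x) = W.hom (u' x) := by
        intro x
        show S.liftQ m hSm (Submodule.Quotient.mk (x, 0)) = W.hom (u' x)
        rw [Submodule.liftQ_apply]
        simp [hm, hWh, hur]
      have hirh : ∀ x : a.right, h (ir x) = u.right x := by
        intro x
        show S.liftQ m hSm (Submodule.Quotient.mk (0, x)) = u.right x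
        rw [Submodule.liftQ_apply]
        simp [hm, hWh, hur]
      obtain ⟨w, hw⟩ := happQ W.right hW2 h
      have hjw : ∀ x : Q, w (j x) = h x := by
        intro x
        exact congrFun (congrArg (fun (h' : Q ⟶ W.right) => (h' : Q → W.right)) hw) x
      refine ⟨Arrow.homMk (u := u') (v := w) ?_, ?_⟩
      · ext x
        show W.hom (u' x) = w (j (il x))
        rw [hjw, hilh]
      · ext x
        · show u' (gA x) = u.left x
          exact hu'x x
        · show w (j (ir x)) = u.right x
          rw [hjw, hirh]
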